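/- Norm growth of the analytically continued K-fixed vector (‖π_λ(a_ε)v_K‖ ≍ √|log ε|): for every λ ∈ ℝ there exist constants 0 < c ≤ C and ε₀ ∈ (0, 1) such that for all ε ∈ (0, ε₀), c·log(1/ε) ≤ ∫_ℝ ‖ (1 + e^{−i(π−4ε)}·x²)^{−(1+iλ)/2} ‖² dx ≤ C·log(1/ε), where the complex power is the principal branch (for 0 < ε < π/4 the base 1 + e^{−i(π−4ε)}x² = 1 − x²cos(4ε) − i·x²sin(4ε) never lies on the cut (−∞, 0]). -/

import Mathlib

open Real MeasureTheory

noncomputable def zfun (ε x : ℝ) : ℂ :=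
  1 + Complex.exp (-((π - 4 * ε : ℝ) : ℂ) * Complex.I) * (x : ℂ) ^ 2

lemma abs_zfun (ε x : ℝ) :
    ‖zfun ε x‖
      = Real.sqrt ((x^2 - Real.cos (4*ε))^2 + Real.sin (4*ε)^2) := by
  have he : (-((π - 4 * ε : ℝ) : ℂ) * Complex.I) = (((4*ε - π : ℝ)) : ℂ) * Complex.I := by
    push_cast; ring
  rw [zfun, he]
  have hc : Real.cos (4*ε - π) = -Real.cos (4*ε) := by
    rw [← Real.cos_neg, neg_sub, Real.cos_pi_sub]
  have hs : Real.sin (4*ε - π) = -Real.sin (4*ε) := by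
    rw [← neg_neg (4*ε - π), Real.sin_neg, neg_sub, Real.sin_pi_sub]
  rw [Complex.norm_def, Complex.normSq_apply]
  simp only [Complex.add_re, Complex.add_im, Complex.mul_re, Complex.mul_im,
    Complex.exp_ofReal_mul_I_re, Complex.exp_ofReal_mul_I_im, Complex.one_re, Complex.one_im]
  have hx2 : ((x:ℂ)^2).re = x^2 := by norm_cast
  have hx2' : ((x:ℂ)^2).im = 0 := by norm_cast
  rw [hx2, hx2', hc, hs]
  congr 1
  have h1 := Real.sin_sq_add_cos_sq (4*ε)
  have h4 : (Real.sin (4*ε)^2 + Real.cos (4*ε)^2) * x^4 = x^4 := by rw [h1]; ring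
  nlinarith [h1, h4]

lemma Qpos {ε : ℝ} (hs : 0 < Real.sin (4*ε)) (x : ℝ) :
    0 < (x^2 - Real.cos (4*ε))^2 + Real.sin (4*ε)^2 := by positivity

lemma zfun_ne {ε : ℝ} (hs : 0 < Real.sin (4*ε)) (x : ℝ) : zfun ε x ≠ 0 := by
  intro h
  have := abs_zfun ε x
  rw [h] at this
  simp only [norm_zero] at this
  have := (Real.sqrt_eq_zero (le_of_lt (Qpos hs x))).mp this.symm
  exact (Qpos hs x).ne' this

lemma norm_sq_cpow (lam : ℝ) {z : ℂ} (hz : z ≠ 0) :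
    ‖z ^ (-((1 : ℂ) + Complex.I * lam) / 2)‖ ^ 2
      = ‖z‖⁻¹ * Real.exp (lam * Complex.arg z) := by
  rw [Complex.norm_cpow_of_ne_zero hz]
  have h1 : (-((1 : ℂ) + Complex.I * lam) / 2).re = -(1/2) := by simp [Complex.div_re]; ring
  have h2 : (-((1 : ℂ) + Complex.I * lam) / 2).im = -(lam/2) := by simp [Complex.div_im]; ring
  rw [h1, h2]
  rw [div_pow, ← Real.exp_nat_mul, ← Real.rpow_natCast (‖z‖ ^ (-(1/2):ℝ)),
    ← Real.rpow_mul (norm_nonneg z)]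
  norm_num
  rw [Real.rpow_neg_one, div_eq_mul_inv, ← Real.exp_neg]
  ring_nf

-- pointwise two-sided bound
lemma f_le {lam ε : ℝ} (hs : 0 < Real.sin (4*ε)) (x : ℝ) :
    ‖(zfun ε x) ^ (-((1 : ℂ) + Complex.I * lam) / 2)‖ ^ 2
      ≤ Real.exp (π * |lam|) * (Real.sqrt ((x^2 - Real.cos (4*ε))^2 + Real.sin (4*ε)^2))⁻¹ := by
  rw [norm_sq_cpow lam (zfun_ne hs x), abs_zfun]
  have h1 : Real.exp (lam * Complex.arg (zfun ε x)) ≤ Real.exp (π * |lam|) := by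
    apply Real.exp_le_exp.mpr
    calc lam * Complex.arg (zfun ε x) ≤ |lam * Complex.arg (zfun ε x)| := le_abs_self _
    _ = |lam| * |Complex.arg (zfun ε x)| := abs_mul _ _
    _ ≤ |lam| * π :=
        mul_le_mul_of_nonneg_left (Complex.abs_arg_le_pi _) (abs_nonneg _)
    _ = π * |lam| := mul_comm _ _
  calc (Real.sqrt ((x^2 - Real.cos (4*ε))^2 + Real.sin (4*ε)^2))⁻¹
        * Real.exp (lam * Complex.arg (zfun ε x))
      ≤ (Real.sqrt ((x^2 - Real.cos (4*ε))^2 + Real.sin (4*ε)^2))⁻¹ * Real.exp (π * |lam|) :=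
        mul_le_mul_of_nonneg_left h1 (by positivity)
    _ = _ := mul_comm _ _

lemma le_f {lam ε : ℝ} (hs : 0 < Real.sin (4*ε)) (x : ℝ) :
    Real.exp (-(π * |lam|)) * (Real.sqrt ((x^2 - Real.cos (4*ε))^2 + Real.sin (4*ε)^2))⁻¹
      ≤ ‖(zfun ε x) ^ (-((1 : ℂ) + Complex.I * lam) / 2)‖ ^ 2 := by
  rw [norm_sq_cpow lam (zfun_ne hs x), abs_zfun]
  have h1 : Real.exp (-(π * |lam|)) ≤ Real.exp (lam * Complex.arg (zfun ε x)) := by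
    apply Real.exp_le_exp.mpr
    have h2 : |lam * Complex.arg (zfun ε x)| ≤ π * |lam| := by
      rw [abs_mul]
      calc |lam| * |Complex.arg (zfun ε x)| ≤ |lam| * π :=
            mul_le_mul_of_nonneg_left (Complex.abs_arg_le_pi _) (abs_nonneg _)
        _ = π * |lam| := mul_comm _ _
    linarith [neg_abs_le (lam * Complex.arg (zfun ε x))]
  calc Real.exp (-(π * |lam|)) * (Real.sqrt ((x^2 - Real.cos (4*ε))^2 + Real.sin (4*ε)^2))⁻¹
      ≤ Real.exp (lam * Complex.arg (zfun ε x))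
        * (Real.sqrt ((x^2 - Real.cos (4*ε))^2 + Real.sin (4*ε)^2))⁻¹ :=
        mul_le_mul_of_nonneg_right h1 (by positivity)
    _ = _ := mul_comm _ _

lemma f_nonneg (lam ε x : ℝ) :
    0 ≤ ‖(zfun ε x) ^ (-((1 : ℂ) + Complex.I * lam) / 2)‖ ^ 2 := by positivity

lemma f_meas (lam ε : ℝ) (hs : 0 < Real.sin (4*ε)) :
    Measurable (fun x : ℝ => ‖(zfun ε x) ^ (-((1 : ℂ) + Complex.I * lam) / 2)‖ ^ 2) := by
  have hzc : Continuous (fun x : ℝ => zfun ε x) := by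
    unfold zfun; continuity
  have : (fun x : ℝ => ‖(zfun ε x) ^ (-((1 : ℂ) + Complex.I * lam) / 2)‖ ^ 2)
      = fun x : ℝ => ‖Complex.exp (Complex.log (zfun ε x) * (-((1 : ℂ) + Complex.I * lam) / 2))‖ ^ 2 := by
    funext x
    rw [Complex.cpow_def_of_ne_zero (zfun_ne hs x)]
  rw [this]
  exact ((Complex.measurable_exp.comp
    ((Complex.measurable_log.comp hzc.measurable).mul_const _)).norm.pow_const 2)

lemma sqrt_Q_inv_le {ε : ℝ} (hs : 0 < Real.sin (4*ε)) (x : ℝ) :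
    (Real.sqrt ((x^2 - Real.cos (4*ε))^2 + Real.sin (4*ε)^2))⁻¹
      ≤ 3 / Real.sin (4*ε) * (1 + x^2)⁻¹ := by
  set s := Real.sin (4*ε) with hsdef
  set c := Real.cos (4*ε) with hcdef
  have hc1 : c ≤ 1 := Real.cos_le_one _
  have key : s * (1 + x^2) / 3 ≤ Real.sqrt ((x^2 - c)^2 + s^2) := by
    rcases le_or_gt (x^2) 2 with h2 | h2
    · have h1 : s * (1 + x^2) / 3 ≤ s := by nlinarith [sq_nonneg x]
      have h3 : s = Real.sqrt (s^2) := (Real.sqrt_sq hs.le).symm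
      calc s * (1 + x^2) / 3 ≤ s := h1
        _ = Real.sqrt (s^2) := h3
        _ ≤ _ := Real.sqrt_le_sqrt (by nlinarith [sq_nonneg (x^2 - c)])
    · have hs1 : s ≤ 1 := Real.sin_le_one _
      have h1 : s * (1 + x^2) / 3 ≤ x^2 - c := by nlinarith [sq_nonneg x]
      have h4 : (0:ℝ) ≤ x^2 - c := by nlinarith
      calc s * (1 + x^2) / 3 ≤ x^2 - c := h1
        _ = Real.sqrt ((x^2 - c)^2) := by rw [Real.sqrt_sq h4]
        _ ≤ _ := Real.sqrt_le_sqrt (by nlinarith)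
  have hpos : 0 < s * (1 + x^2) / 3 := by positivity
  have := inv_anti₀ hpos key
  calc (Real.sqrt ((x^2 - c)^2 + s^2))⁻¹ ≤ (s * (1 + x^2) / 3)⁻¹ := this
    _ = 3 / s * (1 + x^2)⁻¹ := by field_simp
    _ ≤ _ := le_refl _

lemma f_integrable (lam ε : ℝ) (hs : 0 < Real.sin (4*ε)) :
    Integrable (fun x : ℝ => ‖(zfun ε x) ^ (-((1 : ℂ) + Complex.I * lam) / 2)‖ ^ 2) := by
  have hg : Integrable (fun x : ℝ =>
      (Real.exp (π * |lam|) * (3 / Real.sin (4*ε))) * (1 + x^2)⁻¹) :=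
    integrable_inv_one_add_sq.const_mul _
  refine hg.mono ((f_meas lam ε hs).aestronglyMeasurable) ?_
  filter_upwards with x
  rw [Real.norm_eq_abs, Real.norm_eq_abs, abs_of_nonneg (by positivity),
    abs_of_nonneg (by positivity)]
  calc ‖(zfun ε x) ^ (-((1 : ℂ) + Complex.I * lam) / 2)‖ ^ 2
      ≤ Real.exp (π * |lam|) * (Real.sqrt ((x^2 - Real.cos (4*ε))^2 + Real.sin (4*ε)^2))⁻¹ :=
        f_le hs x
    _ ≤ Real.exp (π * |lam|) * (3 / Real.sin (4*ε) * (1 + x^2)⁻¹) :=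
        mul_le_mul_of_nonneg_left (sqrt_Q_inv_le hs x) (Real.exp_nonneg _)
    _ = (Real.exp (π * |lam|) * (3 / Real.sin (4*ε))) * (1 + x^2)⁻¹ := by ring


lemma integral_log_shift {a s b : ℝ} (hs : 0 < s) (hab : a ≤ b) :
    ∫ x in a..b, (3*(x-a)+s)⁻¹
      = (1/3) * (Real.log (3*(b-a)+s) - Real.log s) := by
  have hpos : ∀ x ∈ Set.uIcc a b, 0 < 3*(x-a)+s := by
    intro x hx
    rw [Set.uIcc_of_le hab] at hx
    have := hx.1
    nlinarith
  have hderiv : ∀ x ∈ Set.uIcc a b,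
      HasDerivAt (fun x => (1/3) * Real.log (3*(x-a)+s)) ((3*(x-a)+s)⁻¹) x := by
    intro x hx
    have hg : HasDerivAt (fun x : ℝ => 3*(x-a)+s) 3 x := by
      simpa using (((hasDerivAt_id x).sub_const a).const_mul 3).add_const s
    have hl := (Real.hasDerivAt_log (hpos x hx).ne').comp x hg
    have := hl.const_mul (1/3 : ℝ)
    rw [show (3*(x-a)+s)⁻¹ = 1/3 * ((3*(x-a)+s)⁻¹ * 3) by ring]
    exact this
  have hcont : ContinuousOn (fun x : ℝ => (3*(x-a)+s)⁻¹) (Set.uIcc a b) := by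
    apply ContinuousOn.inv₀
    · fun_prop
    · intro x hx; exact (hpos x hx).ne'
  rw [intervalIntegral.integral_eq_sub_of_hasDerivAt hderiv hcont.intervalIntegrable]
  have : (3:ℝ)*(a-a)+s = s := by ring
  rw [this]
  ring

lemma integral_inv_sqrt_shift {a s l u : ℝ} (hs : 0 < s) :
    ∫ x in l..u, (Real.sqrt ((x-a)^2+s^2))⁻¹
      = Real.arsinh ((u-a)/s) - Real.arsinh ((l-a)/s) := by
  have hkey : ∀ x : ℝ, Real.sqrt ((x-a)^2+s^2) = Real.sqrt (1 + ((x-a)/s)^2) * s := by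
    intro x
    rw [← Real.sqrt_sq hs.le, ← Real.sqrt_mul (by positivity)]
    rw [Real.sqrt_sq hs.le]
    congr 1
    field_simp
    ring
  have hpos : ∀ x : ℝ, 0 < Real.sqrt ((x-a)^2+s^2) := by
    intro x; apply Real.sqrt_pos.mpr; positivity
  have hderiv : ∀ x ∈ Set.uIcc l u,
      HasDerivAt (fun x => Real.arsinh ((x-a)/s)) ((Real.sqrt ((x-a)^2+s^2))⁻¹) x := by
    intro x _
    have hg : HasDerivAt (fun x : ℝ => (x-a)/s) (1/s) x := by
      simpa using ((hasDerivAt_id x).sub_const a).div_const s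
    have h2 := hg.arsinh
    have heq : (Real.sqrt (1 + ((x-a)/s)^2))⁻¹ • (1/s) = (Real.sqrt ((x-a)^2+s^2))⁻¹ := by
      rw [smul_eq_mul, hkey x, mul_inv, one_div]
    rw [heq] at h2
    exact h2
  have hcont : ContinuousOn (fun x : ℝ => (Real.sqrt ((x-a)^2+s^2))⁻¹) (Set.uIcc l u) := by
    apply ContinuousOn.inv₀
    · fun_prop
    · intro x _; exact (hpos x).ne'
  rw [intervalIntegral.integral_eq_sub_of_hasDerivAt hderiv hcont.intervalIntegrable]


lemma arsinh_le_log {s t : ℝ} (hs : 0 < s) (hs1 : s ≤ 1) (ht : t ≤ 2/s) :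
    Real.arsinh t ≤ Real.log (5/s) := by
  have h1 : Real.arsinh t ≤ Real.arsinh (2/s) := Real.arsinh_le_arsinh.mpr ht
  have h3 : Real.sqrt (1 + (2/s)^2) ≤ 3/s := by
    rw [show (3/s) = Real.sqrt ((3/s)^2) from (Real.sqrt_sq (by positivity)).symm]
    apply Real.sqrt_le_sqrt
    rw [div_pow, div_pow]
    have hs2 : 0 < s^2 := by positivity
    rw [← sub_nonneg]
    have : 3^2/s^2 - (1 + 2^2/s^2) = (5 - s^2)/s^2 := by field_simp; ring
    rw [this]
    apply div_nonneg _ hs2.le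
    nlinarith
  have h2 : Real.arsinh (2/s) = Real.log (2/s + Real.sqrt (1 + (2/s)^2)) := rfl
  calc Real.arsinh t ≤ Real.arsinh (2/s) := h1
    _ = Real.log (2/s + Real.sqrt (1 + (2/s)^2)) := h2
    _ ≤ Real.log (5/s) := by
        apply Real.log_le_log (by positivity)
        have : (5:ℝ)/s = 2/s + 3/s := by ring
        linarith

set_option maxHeartbeats 4000000 in
/-- Norm growth of the analytically continued `K`-fixed vector:
`‖π_λ(a_ε)v_K‖² ≍ |log ε|` as `ε → 0⁺`. -/
theorem norm_growth_of_continued_K_fixed_vector (lam : ℝ) :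
    ∃ c C ε₀ : ℝ, 0 < c ∧ c ≤ C ∧ ε₀ ∈ Set.Ioo (0 : ℝ) 1 ∧
      ∀ ε ∈ Set.Ioo (0 : ℝ) ε₀,
        c * Real.log (1 / ε) ≤
            (∫ x : ℝ,
              ‖((1 + Complex.exp (-((π - 4 * ε : ℝ) : ℂ) * Complex.I) * (x : ℂ) ^ 2) ^
                  (-((1 : ℂ) + Complex.I * lam) / 2) : ℂ)‖ ^ 2) ∧
          (∫ x : ℝ,
              ‖((1 + Complex.exp (-((π - 4 * ε : ℝ) : ℂ) * Complex.I) * (x : ℂ) ^ 2) ^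
                  (-((1 : ℂ) + Complex.I * lam) / 2) : ℂ)‖ ^ 2) ≤
            C * Real.log (1 / ε) := by
  set K := Real.exp (π * |lam|) with hK
  have hKpos : 0 < K := Real.exp_pos _
  have hK1 : 1 ≤ K := Real.one_le_exp (by positivity)
  refine ⟨K⁻¹/6, 20 * K, 1/100, by positivity, ?_, by norm_num, ?_⟩
  · have : K⁻¹ ≤ K := by
      rw [hK, ← Real.exp_neg]
      exact Real.exp_le_exp.mpr (neg_le_self (by positivity))
    nlinarith
  intro ε hε
  obtain ⟨hε0, hε1⟩ := hε
  -- notation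
  set w : ℂ := -((1 : ℂ) + Complex.I * lam) / 2 with hw
  have hzeq : ∀ x : ℝ,
      (1 + Complex.exp (-((π - 4 * ε : ℝ) : ℂ) * Complex.I) * (x : ℂ) ^ 2) = zfun ε x :=
    fun _ => rfl
  simp only [hzeq]
  set s := Real.sin (4*ε) with hsdef
  set c := Real.cos (4*ε) with hcdef
  have h4 : 0 < 4*ε := by linarith
  have h4' : 4*ε ≤ 1/25 := by linarith
  have hsp : 0 < s := Real.sin_pos_of_pos_of_lt_pi h4 (by nlinarith [Real.pi_gt_three])
  have hs4 : s ≤ 4*ε := Real.sin_le h4.le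
  have hs2 : 2*ε ≤ s := by
    have h := Real.sin_gt_sub_cube h4
    rw [← hsdef] at h
    have he1 : ε^2 ≤ 1/10000 := by nlinarith [hε0, hε1]
    have he2 : ε^3 ≤ ε/10000 := by nlinarith [mul_le_mul_of_nonneg_left he1 hε0.le]
    nlinarith [h, he2]
  have hs1 : s ≤ 1 := Real.sin_le_one _
  have hcle : c ≤ 1 := Real.cos_le_one _
  have hcge : 3/4 ≤ c := by
    have h := Real.one_sub_sq_div_two_le_cos (x := 4*ε)
    rw [← hcdef] at h
    nlinarith
  set a := Real.sqrt c with hadef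
  have ha0 : 0 ≤ a := Real.sqrt_nonneg _
  have ha2 : a^2 = c := Real.sq_sqrt (by linarith)
  have ha1 : a ≤ 1 := by nlinarith [sq_nonneg (a-1)]
  have hah : 1/2 ≤ a := by nlinarith [sq_nonneg (a-1/2), sq_nonneg (a+1/2)]
  -- logs
  set L := Real.log (1/ε) with hL
  have hlog100 : (4:ℝ) ≤ Real.log 100 := by
    rw [Real.le_log_iff_exp_le (by norm_num)]
    have he : Real.exp 4 = (Real.exp 1)^(4:ℕ) := by
      rw [← Real.exp_nat_mul]; norm_num
    have h1 := Real.exp_one_lt_d9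
    rw [he]
    have hp : Real.exp 1 ^ (4:ℕ) < 2.7182818286^(4:ℕ) :=
      pow_lt_pow_left₀ h1 (Real.exp_pos 1).le (by norm_num)
    have h2 : (2.7182818286:ℝ)^(4:ℕ) ≤ 100 := by norm_num
    linarith
  have hL4 : 4 ≤ L := by
    refine le_trans hlog100 (Real.log_le_log (by norm_num) ?_)
    rw [le_div_iff₀ hε0]
    linarith
  have hLneg : L = -Real.log ε := by rw [hL, one_div, Real.log_inv]
  -- the function and its basic facts
  have hf_int := f_integrable lam ε hsp
  have hQpos : ∀ x : ℝ, 0 < Real.sqrt ((x^2 - c)^2 + s^2) :=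
    fun x => Real.sqrt_pos.mpr (Qpos hsp x)
  constructor
  · -- LOWER BOUND
    have step1 : ∫ x in Set.Icc a (3/2), ‖(zfun ε x) ^ w‖ ^ 2
        ≤ ∫ x : ℝ, ‖(zfun ε x) ^ w‖ ^ 2 :=
      setIntegral_le_integral hf_int (Filter.Eventually.of_forall (fun x => f_nonneg lam ε x))
    have step2 : ∫ x in Set.Icc a (3/2), K⁻¹ * (3*(x-a)+s)⁻¹
        ≤ ∫ x in Set.Icc a (3/2), ‖(zfun ε x) ^ w‖ ^ 2 := by
      apply setIntegral_mono_on
      · apply (ContinuousOn.integrableOn_Icc)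
        apply ContinuousOn.mul continuousOn_const
        apply ContinuousOn.inv₀
        · fun_prop
        · intro x hx
          have := hx.1
          nlinarith
      · exact hf_int.integrableOn
      · exact measurableSet_Icc
      · intro x hx
        obtain ⟨hxa, hxb⟩ := hx
        have hden : 0 < 3*(x-a)+s := by nlinarith
        have hQle : Real.sqrt ((x^2 - c)^2 + s^2) ≤ 3*(x-a)+s := by
          have h9 : (x^2 - c)^2 + s^2 ≤ (3*(x-a)+s)^2 := by
            have h1 : x^2 - c = (x-a)*(x+a) := by rw [← ha2]; ring
            have h2 : (x+a)^2 ≤ 9 := by nlinarith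
            have h3 : (x^2-c)^2 ≤ (x-a)^2*9 := by
              calc (x^2-c)^2 = (x-a)^2*(x+a)^2 := by rw [h1]; ring
                _ ≤ (x-a)^2*9 := mul_le_mul_of_nonneg_left h2 (sq_nonneg _)
            nlinarith [h3, mul_nonneg (sub_nonneg.mpr hxa) hsp.le]
          calc Real.sqrt ((x^2 - c)^2 + s^2) ≤ Real.sqrt ((3*(x-a)+s)^2) :=
                Real.sqrt_le_sqrt h9
            _ = 3*(x-a)+s := Real.sqrt_sq hden.le
        have hinv : (3*(x-a)+s)⁻¹ ≤ (Real.sqrt ((x^2 - c)^2 + s^2))⁻¹ :=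
          inv_anti₀ (hQpos x) hQle
        calc K⁻¹ * (3*(x-a)+s)⁻¹ ≤ K⁻¹ * (Real.sqrt ((x^2 - c)^2 + s^2))⁻¹ := by
              exact mul_le_mul_of_nonneg_left hinv (by positivity)
          _ = Real.exp (-(π * |lam|)) * (Real.sqrt ((x^2 - c)^2 + s^2))⁻¹ := by
              rw [hK, ← Real.exp_neg]
          _ ≤ ‖(zfun ε x) ^ w‖ ^ 2 := le_f hsp x
    have step3 : ∫ x in Set.Icc a (3/2), K⁻¹ * (3*(x-a)+s)⁻¹
        = K⁻¹ * ((1/3) * (Real.log (3*(3/2-a)+s) - Real.log s)) := by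
      rw [MeasureTheory.integral_const_mul]
      congr 1
      rw [MeasureTheory.integral_Icc_eq_integral_Ioc,
        ← intervalIntegral.integral_of_le (by linarith : a ≤ 3/2)]
      exact integral_log_shift hsp (by linarith)
    have step4 : K⁻¹/6 * L ≤ K⁻¹ * ((1/3) * (Real.log (3*(3/2-a)+s) - Real.log s)) := by
      have hlogpos : 0 ≤ Real.log (3*(3/2-a)+s) := by
        apply Real.log_nonneg
        nlinarith
      have hls : Real.log s ≤ Real.log (4*ε) := Real.log_le_log hsp hs4
      have hl4e : Real.log (4*ε) = Real.log 4 + Real.log ε :=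
        Real.log_mul (by norm_num) hε0.ne'
      have hlog4 : Real.log 4 ≤ 2 := by
        have h24 : (4:ℝ) = 2^(2:ℕ) := by norm_num
        rw [h24, Real.log_pow]
        have := Real.log_two_lt_d9
        norm_num
        nlinarith
      have key : L/2 ≤ Real.log (3*(3/2-a)+s) - Real.log s := by
        have : -Real.log s ≥ L - 2 := by
          rw [hLneg]
          linarith
        linarith
      calc K⁻¹/6 * L = K⁻¹ * ((1/3) * (L/2)) := by ring
        _ ≤ _ := by
            apply mul_le_mul_of_nonneg_left _ (by positivity)
            apply mul_le_mul_of_nonneg_left key (by norm_num)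
    calc K⁻¹/6 * L ≤ K⁻¹ * ((1/3) * (Real.log (3*(3/2-a)+s) - Real.log s)) := step4
      _ = ∫ x in Set.Icc a (3/2), K⁻¹ * (3*(x-a)+s)⁻¹ := step3.symm
      _ ≤ ∫ x in Set.Icc a (3/2), ‖(zfun ε x) ^ w‖ ^ 2 := step2
      _ ≤ _ := step1
  · -- UPPER BOUND
    set G1 : ℝ → ℝ := fun x => (4*K) * (1+x^2)⁻¹ with hG1
    set Gp : ℝ → ℝ := fun x => (2*K) * (Real.sqrt ((x-a)^2+s^2))⁻¹ with hGp
    set Gm : ℝ → ℝ := fun x => (2*K) * (Real.sqrt ((x+a)^2+s^2))⁻¹ with hGm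
    have hPp : ∀ x : ℝ, 0 < Real.sqrt ((x-a)^2+s^2) :=
      fun x => Real.sqrt_pos.mpr (by positivity)
    have hPm : ∀ x : ℝ, 0 < Real.sqrt ((x+a)^2+s^2) :=
      fun x => Real.sqrt_pos.mpr (by positivity)
    have hGp_cont : Continuous Gp := by
      apply continuous_const.mul
      apply Continuous.inv₀
      · fun_prop
      · intro x; exact (hPp x).ne'
    have hGm_cont : Continuous Gm := by
      apply continuous_const.mul
      apply Continuous.inv₀
      · fun_prop
      · intro x; exact (hPm x).ne'
    have hG1_int : Integrable G1 := integrable_inv_one_add_sq.const_mul _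
    have hGp_int : Integrable (Set.indicator (Set.Icc (0:ℝ) 2) Gp) :=
      (hGp_cont.continuousOn.integrableOn_Icc).integrable_indicator measurableSet_Icc
    have hGm_int : Integrable (Set.indicator (Set.Icc (-2:ℝ) 0) Gm) :=
      (hGm_cont.continuousOn.integrableOn_Icc).integrable_indicator measurableSet_Icc
    have hpt : ∀ x : ℝ, ‖(zfun ε x) ^ w‖ ^ 2
        ≤ G1 x + Set.indicator (Set.Icc (0:ℝ) 2) Gp x
            + Set.indicator (Set.Icc (-2:ℝ) 0) Gm x := by
      intro x
      have hfle := f_le (lam := lam) hsp x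
      have hG1nn : 0 ≤ G1 x := by rw [hG1]; positivity
      have hindp : 0 ≤ Set.indicator (Set.Icc (0:ℝ) 2) Gp x :=
        Set.indicator_nonneg (fun y _ => by rw [hGp]; positivity) x
      have hindm : 0 ≤ Set.indicator (Set.Icc (-2:ℝ) 0) Gm x :=
        Set.indicator_nonneg (fun y _ => by rw [hGm]; positivity) x
      have hxx : x^2 - c = (x-a)*(x+a) := by rw [← ha2]; ring
      have hG1case : 4 < x^2 → ‖(zfun ε x) ^ w‖ ^ 2 ≤ G1 x := by
        intro hx4
        have h1 : (1+x^2)/4 ≤ Real.sqrt ((x^2 - c)^2 + s^2) := by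
          calc (1+x^2)/4 ≤ x^2 - c := by nlinarith
            _ = Real.sqrt ((x^2-c)^2) := (Real.sqrt_sq (by nlinarith)).symm
            _ ≤ _ := Real.sqrt_le_sqrt (by nlinarith [sq_nonneg s])
        have h2 : (Real.sqrt ((x^2 - c)^2 + s^2))⁻¹ ≤ 4 * (1+x^2)⁻¹ := by
          have h3 := inv_anti₀ (by positivity : (0:ℝ) < (1+x^2)/4) h1
          calc (Real.sqrt ((x^2 - c)^2 + s^2))⁻¹ ≤ ((1+x^2)/4)⁻¹ := h3
            _ = 4 * (1+x^2)⁻¹ := by rw [inv_div, div_eq_mul_inv]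
        calc ‖(zfun ε x) ^ w‖ ^ 2 ≤ K * (Real.sqrt ((x^2 - c)^2 + s^2))⁻¹ := hfle
          _ ≤ K * (4 * (1+x^2)⁻¹) := mul_le_mul_of_nonneg_left h2 hKpos.le
          _ = G1 x := by rw [hG1]; ring
      rcases le_or_gt x 0 with hx0 | hx0
      · rcases le_or_gt (-2) x with hx2 | hx2
        · -- x ∈ Icc (-2) 0
          rw [Set.indicator_of_mem (Set.mem_Icc.mpr ⟨hx2, hx0⟩)]
          have key : Real.sqrt ((x+a)^2+s^2) ≤ 2 * Real.sqrt ((x^2 - c)^2 + s^2) := by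
            have h4 : (x^2-c)^2 = (x-a)^2*(x+a)^2 := by rw [hxx]; ring
            have h2q : 1/4 ≤ (x-a)^2 := by nlinarith
            have h3 : (x+a)^2 * (1/4) ≤ (x+a)^2 * (x-a)^2 :=
              mul_le_mul_of_nonneg_left h2q (sq_nonneg _)
            have h1 : (x+a)^2 + s^2 ≤ 4*((x^2-c)^2+s^2) := by nlinarith [sq_nonneg s]
            calc Real.sqrt ((x+a)^2+s^2) ≤ Real.sqrt (4*((x^2-c)^2+s^2)) :=
                  Real.sqrt_le_sqrt h1
              _ = 2 * Real.sqrt ((x^2-c)^2+s^2) := by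
                  rw [show (4:ℝ)*((x^2-c)^2+s^2) = 2^2*((x^2-c)^2+s^2) by norm_num,
                    Real.sqrt_mul (by positivity), Real.sqrt_sq (by norm_num)]
          have h2 : (Real.sqrt ((x^2 - c)^2 + s^2))⁻¹ ≤ 2 * (Real.sqrt ((x+a)^2+s^2))⁻¹ := by
            have h := inv_anti₀ (hPm x) key
            rw [mul_inv] at h
            have h2inv : (2:ℝ)⁻¹ * (Real.sqrt ((x^2 - c)^2 + s^2))⁻¹
                ≤ (Real.sqrt ((x+a)^2+s^2))⁻¹ := h
            linarith
          have : ‖(zfun ε x) ^ w‖ ^ 2 ≤ Gm x := by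
            calc ‖(zfun ε x) ^ w‖ ^ 2 ≤ K * (Real.sqrt ((x^2 - c)^2 + s^2))⁻¹ := hfle
              _ ≤ K * (2 * (Real.sqrt ((x+a)^2+s^2))⁻¹) :=
                  mul_le_mul_of_nonneg_left h2 hKpos.le
              _ = Gm x := by rw [hGm]; ring
          linarith
        · -- x < -2
          have := hG1case (by nlinarith)
          linarith
      · rcases le_or_gt x 2 with hx2 | hx2
        · -- x ∈ Icc 0 2
          rw [Set.indicator_of_mem (Set.mem_Icc.mpr ⟨hx0.le, hx2⟩)]
          have key : Real.sqrt ((x-a)^2+s^2) ≤ 2 * Real.sqrt ((x^2 - c)^2 + s^2) := by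
            have h4 : (x^2-c)^2 = (x-a)^2*(x+a)^2 := by rw [hxx]; ring
            have h2q : 1/4 ≤ (x+a)^2 := by nlinarith
            have h3 : (x-a)^2 * (1/4) ≤ (x-a)^2 * (x+a)^2 :=
              mul_le_mul_of_nonneg_left h2q (sq_nonneg _)
            have h1 : (x-a)^2 + s^2 ≤ 4*((x^2-c)^2+s^2) := by nlinarith [sq_nonneg s]
            calc Real.sqrt ((x-a)^2+s^2) ≤ Real.sqrt (4*((x^2-c)^2+s^2)) :=
                  Real.sqrt_le_sqrt h1
              _ = 2 * Real.sqrt ((x^2-c)^2+s^2) := by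
                  rw [show (4:ℝ)*((x^2-c)^2+s^2) = 2^2*((x^2-c)^2+s^2) by norm_num,
                    Real.sqrt_mul (by positivity), Real.sqrt_sq (by norm_num)]
          have h2 : (Real.sqrt ((x^2 - c)^2 + s^2))⁻¹ ≤ 2 * (Real.sqrt ((x-a)^2+s^2))⁻¹ := by
            have h := inv_anti₀ (hPp x) key
            rw [mul_inv] at h
            have h2inv : (2:ℝ)⁻¹ * (Real.sqrt ((x^2 - c)^2 + s^2))⁻¹
                ≤ (Real.sqrt ((x-a)^2+s^2))⁻¹ := h
            linarith
          have : ‖(zfun ε x) ^ w‖ ^ 2 ≤ Gp x := by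
            calc ‖(zfun ε x) ^ w‖ ^ 2 ≤ K * (Real.sqrt ((x^2 - c)^2 + s^2))⁻¹ := hfle
              _ ≤ K * (2 * (Real.sqrt ((x-a)^2+s^2))⁻¹) :=
                  mul_le_mul_of_nonneg_left h2 hKpos.le
              _ = Gp x := by rw [hGp]; ring
          linarith
        · -- x > 2
          have := hG1case (by nlinarith)
          linarith
    have hmono : ∫ x : ℝ, ‖(zfun ε x) ^ w‖ ^ 2
        ≤ ∫ x : ℝ, (G1 x + Set.indicator (Set.Icc (0:ℝ) 2) Gp x
            + Set.indicator (Set.Icc (-2:ℝ) 0) Gm x) :=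
      integral_mono hf_int ((hG1_int.add hGp_int).add hGm_int) hpt
    have hsplit : ∫ x : ℝ, (G1 x + Set.indicator (Set.Icc (0:ℝ) 2) Gp x
            + Set.indicator (Set.Icc (-2:ℝ) 0) Gm x)
        = (∫ x : ℝ, G1 x) + (∫ x : ℝ, Set.indicator (Set.Icc (0:ℝ) 2) Gp x)
            + (∫ x : ℝ, Set.indicator (Set.Icc (-2:ℝ) 0) Gm x) := by
      have e1 := MeasureTheory.integral_add (hG1_int.add hGp_int) hGm_int
      have e2 := MeasureTheory.integral_add hG1_int hGp_int
      simp only [Pi.add_apply] at e1 e2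
      rw [e1, e2]
    have hI1 : (∫ x : ℝ, G1 x) = 4*K*π := by
      rw [hG1]
      rw [MeasureTheory.integral_const_mul, integral_univ_inv_one_add_sq]
    have harsinh : Real.arsinh ((2-a)/s) + Real.arsinh (a/s) ≤ 2 * Real.log (5/s) := by
      have h1 : Real.arsinh ((2-a)/s) ≤ Real.log (5/s) :=
        arsinh_le_log hsp hs1 (by gcongr <;> linarith)
      have h2 : Real.arsinh (a/s) ≤ Real.log (5/s) :=
        arsinh_le_log hsp hs1 (by gcongr <;> linarith)
      linarith
    have hIp : (∫ x : ℝ, Set.indicator (Set.Icc (0:ℝ) 2) Gp x)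
        ≤ 2*K * (Real.arsinh ((2-a)/s) + Real.arsinh (a/s)) := by
      rw [MeasureTheory.integral_indicator measurableSet_Icc,
        MeasureTheory.integral_Icc_eq_integral_Ioc,
        ← intervalIntegral.integral_of_le (by norm_num : (0:ℝ) ≤ 2)]
      rw [hGp]
      rw [intervalIntegral.integral_const_mul, integral_inv_sqrt_shift hsp]
      have h0a : (0-a)/s = -(a/s) := by ring
      rw [h0a, Real.arsinh_neg]
      apply le_of_eq
      ring
    have hIm : (∫ x : ℝ, Set.indicator (Set.Icc (-2:ℝ) 0) Gm x)
        ≤ 2*K * (Real.arsinh ((2-a)/s) + Real.arsinh (a/s)) := by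
      rw [MeasureTheory.integral_indicator measurableSet_Icc,
        MeasureTheory.integral_Icc_eq_integral_Ioc,
        ← intervalIntegral.integral_of_le (by norm_num : (-2:ℝ) ≤ 0)]
      rw [hGm]
      have heq : ∀ x : ℝ, (x+a)^2 = (x-(-a))^2 := by intro x; ring
      rw [intervalIntegral.integral_const_mul]
      simp_rw [heq]
      rw [integral_inv_sqrt_shift hsp]
      have h1 : (0-(-a))/s = a/s := by ring
      have h2 : (-2-(-a))/s = -((2-a)/s) := by ring
      rw [h1, h2, Real.arsinh_neg]
      apply le_of_eq
      ring
    have hlog5 : Real.log (5/s) ≤ (5/4)*L := by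
      have h1 : Real.log (5/s) ≤ Real.log (5/(2*ε)) := by
        apply Real.log_le_log (by positivity)
        exact div_le_div_of_nonneg_left (by norm_num) (by positivity) hs2
      have h2 : Real.log (5/(2*ε)) = Real.log (5/2) + L := by
        rw [hL, show (5:ℝ)/(2*ε) = (5/2)*(1/ε) by field_simp, Real.log_mul (by norm_num) (by positivity)]
      have h3 : Real.log (5/2) ≤ 1 := by
        rw [Real.log_le_iff_le_exp (by norm_num)]
        have := Real.exp_one_gt_d9
        linarith
      linarith
    have hpi : 4*K*π ≤ (13/4)*K*L := by
      have := Real.pi_lt_d2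
      nlinarith [Real.pi_pos]
    have hlogs_nn : 0 ≤ Real.log (5/s) := Real.log_nonneg (by
      rw [le_div_iff₀ hsp]; linarith)
    calc ∫ x : ℝ, ‖(zfun ε x) ^ w‖ ^ 2
        ≤ (∫ x : ℝ, G1 x) + (∫ x : ℝ, Set.indicator (Set.Icc (0:ℝ) 2) Gp x)
            + (∫ x : ℝ, Set.indicator (Set.Icc (-2:ℝ) 0) Gm x) := by
          rw [← hsplit]; exact hmono
      _ ≤ 4*K*π + 2*K * (2 * Real.log (5/s)) + 2*K * (2 * Real.log (5/s)) := by
          have hp := hIp.trans (mul_le_mul_of_nonneg_left harsinh (by positivity))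
          have hm := hIm.trans (mul_le_mul_of_nonneg_left harsinh (by positivity))
          rw [hI1]
          linarith
      _ ≤ (13/4)*K*L + 2*K*(2*((5/4)*L)) + 2*K*(2*((5/4)*L)) := by
          have := mul_le_mul_of_nonneg_left hlog5 (by positivity : (0:ℝ) ≤ 2*K*2)
          nlinarith [hpi, hlog5, hKpos.le]
      _ ≤ 20 * K * L := by nlinarith [hKpos.le, hL4]
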